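/- Let $T_\ell$ be the Chebyshev polynomials of the first kind and $P_\ell$ the polynomials with $P_0=0$, $P_1=P_2=1$, $P_{2j+1}(t)=tP_{2j}(t)-P_{2j-1}(t)$, $P_{2j+2}(t)=P_{2j+1}(t)-P_{2j}(t)$. Then for every $j\ge 0$ and all real $x$: $T_{2j+2}(x)=1+(2x^2-2)\,P_{2j+2}(2x+2)^2$. -/

import Mathlib

noncomputable def chebU : ℕ → ℝ → ℝ
  | 0, _ => 1
  | 1, x => 2*x
  | (n+2), x => 2*x*chebU (n+1) x - chebU n x

lemma chebU_zero (x : ℝ) : chebU 0 x = 1 := rfl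
lemma chebU_one (x : ℝ) : chebU 1 x = 2*x := rfl
lemma chebU_add_two (n : ℕ) (x : ℝ) :
    chebU (n+2) x = 2*x*chebU (n+1) x - chebU n x := rfl

lemma chebU_pell (n : ℕ) (x : ℝ) :
    (chebU (n+1) x)^2 + (chebU n x)^2 - 2*x*chebU (n+1) x * chebU n x = 1 := by
  induction n with
  | zero => simp [chebU_zero, chebU_one]; ring
  | succ n ih =>
    rw [show n+1+1 = n+2 from rfl, chebU_add_two]
    linear_combination ih

theorem stmt4 (T : ℕ → ℝ → ℝ)
    (hT0 : ∀ x : ℝ, T 0 x = 1) (hT1 : ∀ x : ℝ, T 1 x = x)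
    (hTrec : ∀ (n : ℕ) (x : ℝ), T (n+2) x = 2*x*T (n+1) x - T n x)
    (P : ℕ → ℝ → ℝ)
    (hP0 : ∀ t : ℝ, P 0 t = 0) (hP1 : ∀ t : ℝ, P 1 t = 1) (hP2 : ∀ t : ℝ, P 2 t = 1)
    (hodd : ∀ j : ℕ, 1 ≤ j → ∀ t : ℝ, P (2*j+1) t = t * P (2*j) t - P (2*j-1) t)
    (heven : ∀ j : ℕ, 1 ≤ j → ∀ t : ℝ, P (2*j+2) t = P (2*j+1) t - P (2*j) t) :
    ∀ (j : ℕ) (x : ℝ), T (2*j+2) x = 1 + (2*x^2-2) * (P (2*j+2) (2*x+2))^2 := by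
  have hPu : ∀ (j : ℕ) (x : ℝ), P (2*j+2) (2*x+2) = chebU j x ∧
      P (2*j+3) (2*x+2) = chebU (j+1) x + chebU j x := by
    intro j
    induction j with
    | zero =>
      intro x
      have h3 : P 3 (2*x+2) = (2*x+2) * P 2 (2*x+2) - P 1 (2*x+2) := by
        have := hodd 1 le_rfl (2*x+2)
        simpa using this
      constructor
      · simpa [chebU_zero] using hP2 (2*x+2)
      · simp only [Nat.mul_zero, Nat.zero_add]
        rw [h3, hP2, hP1, chebU_one, chebU_zero]; ring
    | succ j ih =>
      intro x
      obtain ⟨hb, ha⟩ := ih x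
      have hb' : P (2*(j+1)+2) (2*x+2) = chebU (j+1) x := by
        have he := heven (j+1) (by omega) (2*x+2)
        rw [show 2*(j+1)+1 = 2*j+3 by ring, show 2*(j+1) = 2*j+2 by ring] at he
        rw [show 2*(j+1)+2 = 2*j+2+2 by ring, he, ha, hb]; ring
      refine ⟨hb', ?_⟩
      have ho := hodd (j+2) (by omega) (2*x+2)
      rw [show 2*(j+2)-1 = 2*j+3 by omega, show 2*(j+2)+1 = 2*(j+1)+3 by ring,
        show 2*(j+2) = 2*(j+1)+2 by ring] at ho
      rw [ho, hb', ha, show j+1+1 = j+2 from rfl, chebU_add_two]; ring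
  have hTu : ∀ (j : ℕ) (x : ℝ), T (2*j+2) x = 1 + (2*x^2-2) * (chebU j x)^2 ∧
      T (2*j+3) x = x + (2*x^2-2) * chebU (j+1) x * chebU j x := by
    intro j
    induction j with
    | zero =>
      intro x
      have h2 : T 2 x = 2*x*T 1 x - T 0 x := hTrec 0 x
      have h3 : T 3 x = 2*x*T 2 x - T 1 x := hTrec 1 x
      rw [hT1, hT0] at h2
      constructor
      · simp only [Nat.mul_zero, Nat.zero_add]
        rw [h2, chebU_zero]; ring
      · simp only [Nat.mul_zero, Nat.zero_add]
        rw [h3, h2, hT1, chebU_one, chebU_zero]; ring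
    | succ j ih =>
      intro x
      obtain ⟨h2, h3⟩ := ih x
      have pell := chebU_pell j x
      have ru := chebU_add_two j x
      have h4 : T (2*j+4) x = 2*x*T (2*j+3) x - T (2*j+2) x := hTrec (2*j+2) x
      have h5 : T (2*j+5) x = 2*x*T (2*j+4) x - T (2*j+3) x := hTrec (2*j+3) x
      have e1 : 2*(j+1)+2 = 2*j+4 := by ring
      have e2 : 2*(j+1)+3 = 2*j+5 := by ring
      rw [e1, e2]
      constructor
      · rw [h4, h3, h2]; linear_combination (-(2*x^2-2))*pell
      · rw [h5, h4, h3, h2, show j+1+1 = j+2 from rfl, chebU_add_two]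
        linear_combination (-(2*x*(2*x^2-2)))*pell
  intro j x
  rw [(hPu j x).1, (hTu j x).1]
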